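/- Let μ be a stationary distribution of a PIN model on a graph with n nodes and let V : ℝ^𝒜 → ℝ be twice continuously differentiable. Then |Σ_{x∈𝒳} μ_x ∇V(θ(x))·D(x)| ≤ K/n, where K = max_{θ∈P(𝒜)} ‖∇²V(θ)‖₂ is the maximum over the probability simplex of the operator 2-norm of the Hessian of V (in particular K depends only on V). -/

import Mathlib

open Finset Filter

noncomputable section

/-- The empirical type (state frequencies) of a configuration. -/
def confType {V A : Type*} [Fintype V] [DecidableEq A] (x : V → A) (i : A) : ℝ :=
  ((Finset.univ.filter fun v => x v = i).card : ℝ) / (Fintype.card V : ℝ)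

/-- The boundary (empirical link-pair frequencies) of a configuration. -/
def boundary {V A : Type*} [DecidableEq A] (E : Finset (V × V)) (x : V → A) (i j : A) : ℝ :=
  ((E.filter fun e => x e.1 = i ∧ x e.2 = j).card : ℝ) / (E.card : ℝ)

/-- Off-diagonal part of the PIN transition matrix. -/
def Toff {V A : Type*} [Fintype V] [DecidableEq V] [DecidableEq A]
    (E : Finset (V × V)) (ρ : ℝ) (P : A → A → ℝ) (φ : A → A → A → ℝ) (x y : V → A) : ℝ :=
  if (Finset.univ.filter fun v => x v ≠ y v).card = 1 then
    ∑ u ∈ Finset.univ.filter fun v => x v ≠ y v,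
      ((1 - ρ) * (1 / (Fintype.card V : ℝ)) * P (x u) (y u)
        + (ρ / (E.card : ℝ)) * ∑ e ∈ E.filter fun e => e.1 = u, φ (x u) (y u) (x e.2))
  else 0

/-- The PIN transition matrix. -/
def pinTrans {V A : Type*} [Fintype V] [DecidableEq V] [Fintype A] [DecidableEq A]
    (E : Finset (V × V)) (ρ : ℝ) (P : A → A → ℝ) (φ : A → A → A → ℝ) (x y : V → A) : ℝ :=
  if x = y then 1 - ∑ z : V → A, Toff E ρ P φ x z else Toff E ρ P φ x y

/-- The mean drift of the PIN model. -/
def meanDrift {V A : Type*} [Fintype V] [DecidableEq V] [Fintype A] [DecidableEq A]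
    (E : Finset (V × V)) (ρ : ℝ) (P : A → A → ℝ) (φ : A → A → A → ℝ) (x : V → A) (i : A) : ℝ :=
  (Fintype.card V : ℝ) * ∑ y : V → A, pinTrans E ρ P φ x y * (confType y i - confType x i)

/-- The limit drift of the PIN model. -/
def limitDrift {A : Type*} [Fintype A] (ρ : ℝ) (P : A → A → ℝ) (φ : A → A → A → ℝ)
    (θ : A → ℝ) (i : A) : ℝ :=
  ((1 - ρ) * ∑ j, P j i * θ j) + (ρ * ∑ ℓ, θ ℓ * ∑ j, φ j i ℓ * θ j) - θ i

/-- The linear operator Q acting on boundaries. -/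
def Qop {A : Type*} [Fintype A] (φ : A → A → A → ℝ) (ξ : A → A → ℝ) (i : A) : ℝ :=
  (∑ ℓ, ∑ j, ξ j ℓ * φ j i ℓ) - ∑ ℓ, ξ i ℓ

/-- Membership in the probability simplex over `A`. -/
def inSimplex {A : Type*} [Fintype A] (θ : A → ℝ) : Prop :=
  (∀ i, 0 ≤ θ i) ∧ ∑ i, θ i = 1

/-- The hypotheses on the parameters of a PIN model: `ρ ∈ [0,1]`, `P` and each `φ(ℓ)`
row-stochastic and nonnegative, the interaction graph nonempty and without self-loops. -/
def IsPinModel {V A : Type*} [Fintype A] (E : Finset (V × V)) (ρ : ℝ)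
    (P : A → A → ℝ) (φ : A → A → A → ℝ) : Prop :=
  0 ≤ ρ ∧ ρ ≤ 1 ∧ (∀ i j, 0 ≤ P i j) ∧ (∀ i, ∑ j, P i j = 1) ∧
    (∀ i j ℓ, 0 ≤ φ i j ℓ) ∧ (∀ i ℓ, ∑ j, φ i j ℓ = 1) ∧
    E.Nonempty ∧ ∀ e ∈ E, e.1 ≠ e.2

/-- Stationary distribution of a PIN model. -/
def IsPinStationary {V A : Type*} [Fintype V] [DecidableEq V] [Fintype A] [DecidableEq A]
    (E : Finset (V × V)) (ρ : ℝ) (P : A → A → ℝ) (φ : A → A → A → ℝ)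
    (μ : (V → A) → ℝ) : Prop :=
  (∀ x, 0 ≤ μ x) ∧ (∑ x : V → A, μ x = 1) ∧
    ∀ y : V → A, ∑ x : V → A, μ x * pinTrans E ρ P φ x y = μ y

/-- The total mixing gap of a graph. -/
def mixingGap {V : Type*} [Fintype V] [DecidableEq V] (E : Finset (V × V)) : ℝ :=
  sSup {w : ℝ | ∃ S U : Finset V, Disjoint S U ∧
    w = |((E.filter fun e => e.1 ∈ S ∧ e.2 ∈ U).card : ℝ) / (E.card : ℝ) -
      ((S.card : ℝ) * (U.card : ℝ)) / ((Fintype.card V : ℝ) * ((Fintype.card V : ℝ) - 1))|}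

open Classical in
/-- Total `μ`-mass of the set of configurations satisfying `p`. -/
def massOf {X : Type*} [Fintype X] (μ : X → ℝ) (p : X → Prop) : ℝ :=
  ∑ x, if p x then μ x else 0

/-- The Hessian matrix of `W : ℝ^A → ℝ` at `θ`. -/
def hessMat {A : Type*} [Fintype A] [DecidableEq A] (W : (A → ℝ) → ℝ) (θ : A → ℝ) :
    Matrix A A ℝ :=
  fun i j => iteratedFDeriv ℝ 2 W θ ![Pi.single i 1, Pi.single j 1]

/-- The operator 2-norm of the Hessian of `W` at `θ`. -/
def hessOpNorm2 {A : Type*} [Fintype A] [DecidableEq A] (W : (A → ℝ) → ℝ) (θ : A → ℝ) : ℝ :=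
  ‖Matrix.toEuclideanCLM (𝕜 := ℝ) (hessMat W θ)‖

section AuxCombinatorics

variable {V A : Type*} [Fintype V] [DecidableEq V] [Fintype A] [DecidableEq A]

lemma diff_card_one_iff (x z : V → A) :
    (Finset.univ.filter fun v => x v ≠ z v).card = 1 ↔
      ∃ u b, b ≠ x u ∧ z = Function.update x u b := by
  constructor
  · intro h
    obtain ⟨u, hu⟩ := Finset.card_eq_one.mp h
    have hmemu : x u ≠ z u := by
      have : u ∈ Finset.univ.filter fun v => x v ≠ z v := by
        rw [hu]; exact Finset.mem_singleton_self u
      exact (Finset.mem_filter.mp this).2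
    refine ⟨u, z u, Ne.symm hmemu, ?_⟩
    funext v
    by_cases hv : v = u
    · subst hv; simp
    · have hvn : v ∉ (Finset.univ.filter fun v => x v ≠ z v) := by rw [hu]; simp [hv]
      have hxz : ¬ (x v ≠ z v) := fun h' => hvn (Finset.mem_filter.mpr ⟨Finset.mem_univ v, h'⟩)
      rw [Function.update_of_ne hv]
      exact (not_not.mp hxz).symm
  · rintro ⟨u, b, hb, rfl⟩
    have hset : (Finset.univ.filter fun v => x v ≠ Function.update x u b v) = {u} := by
      ext v
      by_cases hv : v = u
      · subst hv; simp [Ne.symm hb]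
      · simp [hv, Function.update_of_ne hv]
    rw [hset, Finset.card_singleton]

lemma update_filter_eq (x : V → A) (u : V) (b : A) (hb : b ≠ x u) :
    (Finset.univ.filter fun v => x v ≠ Function.update x u b v) = {u} := by
  ext v
  by_cases hv : v = u
  · subst hv; simp [Ne.symm hb]
  · simp [hv, Function.update_of_ne hv]

lemma Toff_update (E : Finset (V × V)) (ρ : ℝ) (P : A → A → ℝ) (φ : A → A → A → ℝ)
    (x : V → A) (u : V) (b : A) (hb : b ≠ x u) :
    Toff E ρ P φ x (Function.update x u b) =
      (1 - ρ) * (1 / (Fintype.card V : ℝ)) * P (x u) b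
        + (ρ / (E.card : ℝ)) * ∑ e ∈ E.filter fun e => e.1 = u, φ (x u) b (x e.2) := by
  rw [Toff, update_filter_eq x u b hb]
  simp [Function.update_self]

lemma Toff_self (E : Finset (V × V)) (ρ : ℝ) (P : A → A → ℝ) (φ : A → A → A → ℝ)
    (x : V → A) : Toff E ρ P φ x x = 0 := by
  rw [Toff]
  simp

lemma Toff_nonneg (E : Finset (V × V)) {ρ : ℝ} (P : A → A → ℝ) (φ : A → A → A → ℝ)
    (hρ0 : 0 ≤ ρ) (hρ1 : ρ ≤ 1) (hP0 : ∀ i j, 0 ≤ P i j) (hφ0 : ∀ i j ℓ, 0 ≤ φ i j ℓ)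
    (x y : V → A) : 0 ≤ Toff E ρ P φ x y := by
  rw [Toff]
  split
  · refine Finset.sum_nonneg fun u _ => add_nonneg ?_ ?_
    · refine mul_nonneg (mul_nonneg (by linarith) (by positivity)) (hP0 _ _)
    · exact mul_nonneg (div_nonneg hρ0 (Nat.cast_nonneg _))
        (Finset.sum_nonneg fun e _ => hφ0 _ _ _)
  · exact le_refl 0

lemma sum_Toff_le_one (E : Finset (V × V)) {ρ : ℝ} (P : A → A → ℝ) (φ : A → A → A → ℝ)
    (hρ0 : 0 ≤ ρ) (hρ1 : ρ ≤ 1) (hP0 : ∀ i j, 0 ≤ P i j) (hP1 : ∀ i, ∑ j, P i j = 1)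
    (hφ0 : ∀ i j ℓ, 0 ≤ φ i j ℓ) (hφ1 : ∀ i ℓ, ∑ j, φ i j ℓ = 1) (hE : E.Nonempty)
    (x : V → A) : ∑ z : V → A, Toff E ρ P φ x z ≤ 1 := by
  classical
  have hm1 : (1:ℝ) ≤ (E.card : ℝ) := by exact_mod_cast Finset.card_pos.mpr hE
  have hm0 : (0:ℝ) < (E.card : ℝ) := lt_of_lt_of_le one_pos hm1
  set s : Finset ((_ : V) × A) :=
    Finset.univ.sigma (fun u => Finset.univ.filter fun b => b ≠ x u) with hs
  have himage :
      Finset.univ.filter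
          (fun z : V → A => (Finset.univ.filter fun v => x v ≠ z v).card = 1)
        = s.image fun p => Function.update x p.1 p.2 := by
    ext z
    simp only [Finset.mem_filter, Finset.mem_univ, true_and, Finset.mem_image, hs,
      Finset.mem_sigma]
    rw [diff_card_one_iff]
    constructor
    · rintro ⟨u, b, hb, rfl⟩
      exact ⟨⟨u, b⟩, by simp [hb], rfl⟩
    · rintro ⟨⟨u, b⟩, hp, rfl⟩
      simp only [Finset.mem_filter, Finset.mem_univ, true_and] at hp
      exact ⟨u, b, hp, rfl⟩
  have hinj : ∀ p ∈ s, ∀ q ∈ s,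
      Function.update x p.1 p.2 = Function.update x q.1 q.2 → p = q := by
    rintro ⟨u, b⟩ hp ⟨u', b'⟩ hq h
    simp only [hs, Finset.mem_sigma, Finset.mem_filter, Finset.mem_univ, true_and] at hp hq
    by_cases huu : u = u'
    · subst huu
      have hbb : b = b' := by
        have := congrFun h u
        simpa using this
      subst hbb; rfl
    · exfalso
      have h1 := congrFun h u
      rw [Function.update_self, Function.update_of_ne huu] at h1
      exact hp h1
  have hstep1 : ∑ z : V → A, Toff E ρ P φ x z
      = ∑ z ∈ Finset.univ.filter
          (fun z : V → A => (Finset.univ.filter fun v => x v ≠ z v).card = 1),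
          Toff E ρ P φ x z := by
    refine (Finset.sum_filter_of_ne fun z _ hz => ?_).symm
    by_contra h
    exact hz (if_neg h)
  rw [hstep1, himage, Finset.sum_image hinj, Finset.sum_sigma]
  have hbound : ∀ u : V,
      ∑ b ∈ Finset.univ.filter (fun b => b ≠ x u), Toff E ρ P φ x (Function.update x u b)
        ≤ (1 - ρ) * (1 / (Fintype.card V : ℝ))
          + (ρ / (E.card : ℝ)) * ((E.filter fun e => e.1 = u).card : ℝ) := by
    intro u
    have hcongr : ∀ b ∈ Finset.univ.filter (fun b => b ≠ x u),
        Toff E ρ P φ x (Function.update x u b)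
          = (1 - ρ) * (1 / (Fintype.card V : ℝ)) * P (x u) b
            + (ρ / (E.card : ℝ)) * ∑ e ∈ E.filter fun e => e.1 = u, φ (x u) b (x e.2) :=
      fun b hb => Toff_update E ρ P φ x u b (Finset.mem_filter.mp hb).2
    rw [Finset.sum_congr rfl hcongr, Finset.sum_add_distrib]
    have hsub : ∀ (f : A → ℝ), (∀ j, 0 ≤ f j) → (∑ j, f j = 1) →
        ∑ b ∈ Finset.univ.filter (fun b => b ≠ x u), f b ≤ 1 := by
      intro f hf0 hf1
      calc ∑ b ∈ Finset.univ.filter (fun b => b ≠ x u), f b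
          ≤ ∑ b, f b := Finset.sum_le_sum_of_subset_of_nonneg
            (Finset.filter_subset _ _) (fun j _ _ => hf0 j)
        _ = 1 := hf1
    have h1 : ∑ b ∈ Finset.univ.filter (fun b => b ≠ x u),
        (1 - ρ) * (1 / (Fintype.card V : ℝ)) * P (x u) b
          ≤ (1 - ρ) * (1 / (Fintype.card V : ℝ)) := by
      rw [← Finset.mul_sum]
      calc (1 - ρ) * (1 / (Fintype.card V : ℝ))
            * ∑ b ∈ Finset.univ.filter (fun b => b ≠ x u), P (x u) b
          ≤ (1 - ρ) * (1 / (Fintype.card V : ℝ)) * 1 := by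
            refine mul_le_mul_of_nonneg_left ?_
              (mul_nonneg (by linarith) (by positivity))
            exact hsub _ (hP0 _) (hP1 _)
        _ = (1 - ρ) * (1 / (Fintype.card V : ℝ)) := mul_one _
    have h2 : ∑ b ∈ Finset.univ.filter (fun b => b ≠ x u),
        (ρ / (E.card : ℝ)) * ∑ e ∈ E.filter fun e => e.1 = u, φ (x u) b (x e.2)
          ≤ (ρ / (E.card : ℝ)) * ((E.filter fun e => e.1 = u).card : ℝ) := by
      rw [← Finset.mul_sum]
      refine mul_le_mul_of_nonneg_left ?_ (by positivity)
      rw [Finset.sum_comm]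
      calc ∑ e ∈ E.filter (fun e => e.1 = u),
            ∑ b ∈ Finset.univ.filter (fun b => b ≠ x u), φ (x u) b (x e.2)
          ≤ ∑ _e ∈ E.filter (fun e => e.1 = u), (1:ℝ) :=
            Finset.sum_le_sum fun e _ => hsub _ (fun j => hφ0 _ j _) (hφ1 _ _)
        _ = ((E.filter fun e => e.1 = u).card : ℝ) := by simp
    linarith
  calc ∑ u : V, ∑ b ∈ Finset.univ.filter (fun b => b ≠ x u),
        Toff E ρ P φ x (Function.update x u b)
      ≤ ∑ u : V, ((1 - ρ) * (1 / (Fintype.card V : ℝ))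
          + (ρ / (E.card : ℝ)) * ((E.filter fun e => e.1 = u).card : ℝ)) :=
        Finset.sum_le_sum fun u _ => hbound u
    _ = (Fintype.card V : ℝ) * ((1 - ρ) * (1 / (Fintype.card V : ℝ)))
        + (ρ / (E.card : ℝ)) * ∑ u : V, ((E.filter fun e => e.1 = u).card : ℝ) := by
        rw [Finset.sum_add_distrib, Finset.sum_const, Finset.card_univ, nsmul_eq_mul,
          ← Finset.mul_sum]
    _ = (Fintype.card V : ℝ) * ((1 - ρ) * (1 / (Fintype.card V : ℝ)))
        + (ρ / (E.card : ℝ)) * (E.card : ℝ) := by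
        congr 2
        rw [← Nat.cast_sum]
        congr 1
        exact (Finset.card_eq_sum_card_fiberwise fun e _ => Finset.mem_univ e.1).symm
    _ ≤ (1 - ρ) + ρ := by
        have h2 : (ρ / (E.card : ℝ)) * (E.card : ℝ) = ρ := by field_simp
        have h1 : (Fintype.card V : ℝ) * ((1 - ρ) * (1 / (Fintype.card V : ℝ))) ≤ 1 - ρ := by
          rcases Nat.eq_zero_or_pos (Fintype.card V) with h | h
          · rw [h]; simp; linarith
          · have hn : (0:ℝ) < (Fintype.card V : ℝ) := by exact_mod_cast h
            have : (Fintype.card V : ℝ) * ((1 - ρ) * (1 / (Fintype.card V : ℝ))) = 1 - ρ := by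
              field_simp
            linarith
        linarith
    _ = 1 := by ring

lemma sum_pinTrans (E : Finset (V × V)) (ρ : ℝ) (P : A → A → ℝ) (φ : A → A → A → ℝ)
    (x : V → A) : ∑ y : V → A, pinTrans E ρ P φ x y = 1 := by
  classical
  have hsum : ∑ y : V → A, pinTrans E ρ P φ x y
      = ∑ y : V → A, (Toff E ρ P φ x y
          + if x = y then 1 - (∑ z : V → A, Toff E ρ P φ x z) - Toff E ρ P φ x y else 0) := by
    refine Finset.sum_congr rfl fun y _ => ?_
    by_cases h : x = y
    · subst h; rw [pinTrans]; simp [Toff_self]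
    · rw [pinTrans, if_neg h, if_neg h]; ring
  rw [hsum, Finset.sum_add_distrib, Finset.sum_ite_eq, if_pos (Finset.mem_univ x),
    Toff_self]
  ring

lemma pinTrans_nonneg (E : Finset (V × V)) {ρ : ℝ} (P : A → A → ℝ) (φ : A → A → A → ℝ)
    (hρ0 : 0 ≤ ρ) (hρ1 : ρ ≤ 1) (hP0 : ∀ i j, 0 ≤ P i j) (hP1 : ∀ i, ∑ j, P i j = 1)
    (hφ0 : ∀ i j ℓ, 0 ≤ φ i j ℓ) (hφ1 : ∀ i ℓ, ∑ j, φ i j ℓ = 1) (hE : E.Nonempty)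
    (x y : V → A) : 0 ≤ pinTrans E ρ P φ x y := by
  rw [pinTrans]
  split
  · have := sum_Toff_le_one E P φ hρ0 hρ1 hP0 hP1 hφ0 hφ1 hE x
    linarith
  · exact Toff_nonneg E P φ hρ0 hρ1 hP0 hφ0 x y

lemma confType_eq_sum (x : V → A) (i : A) :
    confType x i = (∑ v : V, if x v = i then (1:ℝ) else 0) / (Fintype.card V : ℝ) := by
  rw [confType]
  congr 1
  rw [Finset.card_filter]
  push_cast
  rfl

lemma confType_update_sub (x : V → A) (u : V) (b : A) (i : A) :
    confType (Function.update x u b) i - confType x i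
      = ((if b = i then (1:ℝ) else 0) - (if x u = i then (1:ℝ) else 0))
          / (Fintype.card V : ℝ) := by
  rw [confType_eq_sum, confType_eq_sum, div_sub_div_same, ← Finset.sum_sub_distrib]
  congr 1
  rw [Finset.sum_eq_single_of_mem u (Finset.mem_univ u)]
  · rw [Function.update_self]
  · intro v _ hv
    rw [Function.update_of_ne hv, sub_self]

lemma sum_sq_confType_update_sub (x : V → A) (u : V) (b : A) (hb : b ≠ x u) :
    ∑ i : A, (confType (Function.update x u b) i - confType x i)^2
      = 2 / (Fintype.card V : ℝ)^2 := by
  have h : ∀ i : A,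
      (confType (Function.update x u b) i - confType x i)^2
        = ((if b = i then (1:ℝ) else 0) + (if x u = i then (1:ℝ) else 0))
            / (Fintype.card V : ℝ)^2 := by
    intro i
    rw [confType_update_sub, div_pow]
    congr 1
    by_cases hbi : b = i <;> by_cases hxi : x u = i
    · exact absurd (hbi.trans hxi.symm) hb
    · simp [hbi, hxi]
    · simp [hbi, hxi]
    · simp [hbi, hxi]
  rw [Finset.sum_congr rfl fun i _ => h i, ← Finset.sum_div]
  congr 1
  rw [Finset.sum_add_distrib]
  rw [Finset.sum_ite_eq, Finset.sum_ite_eq]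
  simp
  norm_num

lemma inSimplex_confType (hV : Fintype.card V ≠ 0) (x : V → A) :
    inSimplex (confType x) := by
  constructor
  · intro i
    rw [confType]
    positivity
  · have hcard : ∑ i : A, ((Finset.univ.filter fun v => x v = i).card : ℝ)
        = (Fintype.card V : ℝ) := by
      rw [← Nat.cast_sum]
      congr 1
      exact (Finset.card_eq_sum_card_fiberwise fun v _ => Finset.mem_univ (x v)).symm
    have hn : (Fintype.card V : ℝ) ≠ 0 := Nat.cast_ne_zero.mpr hV
    simp only [confType]
    rw [← Finset.sum_div, hcard, div_self hn]

end AuxCombinatorics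

section AuxAnalysis

variable {A : Type*} [Fintype A] [DecidableEq A]

lemma quad_abs_le (M : Matrix A A ℝ) (d : A → ℝ) :
    |∑ i, ∑ j, d i * d j * M i j|
      ≤ ‖Matrix.toEuclideanCLM (𝕜 := ℝ) M‖ * ∑ i, d i ^ 2 := by
  classical
  set d' : EuclideanSpace ℝ A := (WithLp.equiv 2 (A → ℝ)).symm d with hd'
  have happ : Matrix.toEuclideanCLM (𝕜 := ℝ) M d'
      = (WithLp.equiv 2 (A → ℝ)).symm (Matrix.toLin' M d) := by
    rw [hd', WithLp.equiv_symm_apply, Matrix.toEuclideanCLM_toLp, Matrix.toLin'_apply]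
  have hinner : ∑ i, ∑ j, d i * d j * M i j
      = inner ℝ d' (Matrix.toEuclideanCLM (𝕜 := ℝ) M d') := by
    rw [happ, PiLp.inner_apply]
    refine Finset.sum_congr rfl fun i _ => ?_
    simp only [RCLike.inner_apply, conj_trivial, hd', WithLp.equiv_symm_apply, PiLp.toLp_apply,
      Matrix.toLin'_apply, Matrix.mulVec, dotProduct]
    rw [Finset.sum_mul]
    refine Finset.sum_congr rfl fun j _ => ?_
    ring
  have hnorm : ‖d'‖^2 = ∑ i, d i ^ 2 := by
    rw [EuclideanSpace.norm_eq]
    rw [Real.sq_sqrt (by positivity)]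
    refine Finset.sum_congr rfl fun i _ => ?_
    simp [hd', WithLp.equiv_symm_apply, PiLp.toLp_apply, sq_abs]
  rw [hinner]
  calc |inner ℝ d' (Matrix.toEuclideanCLM (𝕜 := ℝ) M d')|
      ≤ ‖d'‖ * ‖Matrix.toEuclideanCLM (𝕜 := ℝ) M d'‖ := abs_real_inner_le_norm _ _
    _ ≤ ‖d'‖ * (‖Matrix.toEuclideanCLM (𝕜 := ℝ) M‖ * ‖d'‖) :=
        mul_le_mul_of_nonneg_left ((Matrix.toEuclideanCLM (𝕜 := ℝ) M).le_opNorm d')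
          (norm_nonneg _)
    _ = ‖Matrix.toEuclideanCLM (𝕜 := ℝ) M‖ * ‖d'‖^2 := by ring
    _ = ‖Matrix.toEuclideanCLM (𝕜 := ℝ) M‖ * ∑ i, d i ^ 2 := by rw [hnorm]

lemma hess_bilinear_eq {W : (A → ℝ) → ℝ} (z d : A → ℝ) :
    fderiv ℝ (fderiv ℝ W) z d d = ∑ i, ∑ j, d i * d j * hessMat W z i j := by
  classical
  set B := fderiv ℝ (fderiv ℝ W) z with hB
  have hd : d = ∑ i, d i • (Pi.single i (1:ℝ) : A → ℝ) := by
    funext j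
    simp [Finset.sum_apply, Pi.single_apply]
  have hij : ∀ i j, hessMat W z i j = B (Pi.single i 1) (Pi.single j 1) := by
    intro i j
    rw [hessMat, iteratedFDeriv_two_apply]
    simp [hB]
  have h1 : B d = ∑ i, d i • B (Pi.single i 1) := by
    conv_lhs => rw [hd]
    rw [map_sum]
    exact Finset.sum_congr rfl fun i _ => map_smul B _ _
  have h2 : ∀ i, (B (Pi.single i 1)) d = ∑ j, d j * hessMat W z i j := by
    intro i
    conv_lhs => rw [hd]
    rw [map_sum]
    refine Finset.sum_congr rfl fun j _ => ?_
    rw [map_smul, smul_eq_mul, hij]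
  rw [h1, ContinuousLinearMap.sum_apply]
  refine Finset.sum_congr rfl fun i _ => ?_
  rw [ContinuousLinearMap.smul_apply, smul_eq_mul, h2 i, Finset.mul_sum]
  exact Finset.sum_congr rfl fun j _ => by ring

lemma hess_apply_abs_le {W : (A → ℝ) → ℝ} (z d : A → ℝ) :
    |fderiv ℝ (fderiv ℝ W) z d d| ≤ hessOpNorm2 W z * ∑ i, d i ^ 2 := by
  rw [hess_bilinear_eq, hessOpNorm2]
  exact quad_abs_le _ d

lemma taylor_two_bound {W : (A → ℝ) → ℝ} (hW : ContDiff ℝ 2 W)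
    (θ d : A → ℝ) (C : ℝ)
    (hC : ∀ t : ℝ, t ∈ Set.Icc (0:ℝ) 1 → |fderiv ℝ (fderiv ℝ W) (θ + t • d) d d| ≤ C) :
    |W (θ + d) - W θ - fderiv ℝ W θ d| ≤ C / 2 := by
  classical
  have hW1 : Differentiable ℝ W := hW.differentiable (by norm_num)
  have hF : ContDiff ℝ 1 (fderiv ℝ W) := hW.fderiv_right (by norm_num)
  have hF1 : Differentiable ℝ (fderiv ℝ W) := hF.differentiable (by norm_num)
  set L : ℝ → (A → ℝ) := fun t => θ + t • d with hLdef
  have hL : ∀ t : ℝ, HasDerivAt L d t := by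
    intro t
    have h1 : HasDerivAt (fun s : ℝ => s • d) ((1:ℝ) • d) t :=
      (hasDerivAt_id t).smul_const d
    simpa [hLdef] using h1.const_add θ
  have hLc : Continuous L := by
    refine continuous_const.add ?_
    exact continuous_id.smul continuous_const
  set g' : ℝ → ℝ := fun t => fderiv ℝ W (L t) d with hg'def
  have hg' : ∀ t : ℝ, HasDerivAt (fun s => W (L s)) (g' t) t := fun t =>
    (hW1 (L t)).hasFDerivAt.comp_hasDerivAt t (hL t)
  set g'' : ℝ → ℝ := fun t => fderiv ℝ (fderiv ℝ W) (L t) d d with hg''def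
  have hg'' : ∀ t : ℝ, HasDerivAt g' (g'' t) t := by
    intro t
    have h1 : HasDerivAt (fun s => fderiv ℝ W (L s)) (fderiv ℝ (fderiv ℝ W) (L t) d) t :=
      (hF1 (L t)).hasFDerivAt.comp_hasDerivAt t (hL t)
    have h2 := h1.clm_apply (hasDerivAt_const t d)
    simpa [hg'def, hg''def] using h2
  have hg'c : Continuous g' := by
    have : Continuous fun t => fderiv ℝ W (L t) := hF.continuous.comp hLc
    exact (ContinuousLinearMap.apply ℝ ℝ d).continuous.comp this
  have hlip : ∀ t ∈ Set.Icc (0:ℝ) 1, |g' t - g' 0| ≤ C * t := by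
    intro t ht
    have hb : ∀ s ∈ Set.Icc (0:ℝ) 1, ‖g'' s‖ ≤ C := by
      intro s hs
      rw [Real.norm_eq_abs]
      exact hC s hs
    have := (convex_Icc (0:ℝ) 1).norm_image_sub_le_of_norm_hasDerivWithin_le
      (fun s hs => (hg'' s).hasDerivWithinAt) hb
      (Set.left_mem_Icc.mpr zero_le_one) ht
    rw [Real.norm_eq_abs, Real.norm_eq_abs, sub_zero] at this
    calc |g' t - g' 0| ≤ C * |t| := this
      _ = C * t := by rw [abs_of_nonneg ht.1]
  have hint : ∫ t in (0:ℝ)..1, g' t = W (L 1) - W (L 0) :=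
    intervalIntegral.integral_eq_sub_of_hasDerivAt (fun t _ => hg' t)
      (hg'c.intervalIntegrable 0 1)
  have hL1 : L 1 = θ + d := by simp [hLdef]
  have hL0 : L 0 = θ := by simp [hLdef]
  have hg'0 : g' 0 = fderiv ℝ W θ d := by simp [hg'def, hL0]
  have hsplit : W (θ + d) - W θ - fderiv ℝ W θ d = ∫ t in (0:ℝ)..1, (g' t - g' 0) := by
    rw [intervalIntegral.integral_sub (hg'c.intervalIntegrable 0 1)
      (intervalIntegrable_const), hint, hL1, hL0, hg'0]
    simp
  rw [hsplit]
  calc |∫ t in (0:ℝ)..1, (g' t - g' 0)|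
      ≤ ∫ t in (0:ℝ)..1, |g' t - g' 0| :=
        intervalIntegral.abs_integral_le_integral_abs zero_le_one
    _ ≤ ∫ t in (0:ℝ)..1, C * t := by
        refine intervalIntegral.integral_mono_on zero_le_one ?_ ?_ ?_
        · exact (hg'c.sub continuous_const).abs.intervalIntegrable 0 1
        · exact (continuous_const.mul continuous_id).intervalIntegrable 0 1
        · exact fun t ht => hlip t ht
    _ = C / 2 := by
        rw [intervalIntegral.integral_const_mul, integral_id]
        ring

lemma bddAbove_hessSet {W : (A → ℝ) → ℝ} (hW : ContDiff ℝ 2 W) :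
    BddAbove {k : ℝ | ∃ θ : A → ℝ, inSimplex θ ∧ k = hessOpNorm2 W θ} := by
  classical
  have hset : {k : ℝ | ∃ θ : A → ℝ, inSimplex θ ∧ k = hessOpNorm2 W θ}
      = (fun θ => hessOpNorm2 W θ) '' {θ : A → ℝ | inSimplex θ} := by
    ext k
    simp only [Set.mem_setOf_eq, Set.mem_image]
    constructor
    · rintro ⟨θ, hθ, rfl⟩; exact ⟨θ, hθ, rfl⟩
    · rintro ⟨θ, hθ, rfl⟩; exact ⟨θ, hθ, rfl⟩
  rw [hset]
  have hclosed : IsClosed {θ : A → ℝ | inSimplex θ} := by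
    have heq : {θ : A → ℝ | inSimplex θ}
        = (⋂ i, {θ : A → ℝ | 0 ≤ θ i}) ∩ {θ : A → ℝ | ∑ i, θ i = 1} := by
      ext θ
      simp [inSimplex, Set.mem_iInter]
    rw [heq]
    exact ((isClosed_iInter fun i =>
      isClosed_le continuous_const (continuous_apply i))).inter
      (isClosed_eq (continuous_finset_sum _ fun i _ => continuous_apply i) continuous_const)
  have hbddset : Bornology.IsBounded {θ : A → ℝ | inSimplex θ} := by
    refine (Metric.isBounded_closedBall (x := (0 : A → ℝ)) (r := 1)).subset ?_
    intro θ hθ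
    rw [Metric.mem_closedBall, dist_zero_right]
    rw [pi_norm_le_iff_of_nonneg zero_le_one]
    intro i
    rw [Real.norm_eq_abs, abs_of_nonneg (hθ.1 i)]
    calc θ i ≤ ∑ j, θ j := Finset.single_le_sum (fun j _ => hθ.1 j) (Finset.mem_univ i)
      _ = 1 := hθ.2
  have hcompact : IsCompact {θ : A → ℝ | inSimplex θ} :=
    Metric.isCompact_of_isClosed_isBounded hclosed hbddset
  have hcont : Continuous fun θ : A → ℝ => hessOpNorm2 W θ := by
    have c1 : Continuous fun θ : A → ℝ => iteratedFDeriv ℝ 2 W θ :=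
      hW.continuous_iteratedFDeriv (le_refl 2)
    have c2 : Continuous fun θ : A → ℝ => hessMat W θ := by
      refine continuous_pi fun i => continuous_pi fun j => ?_
      exact (ContinuousMultilinearMap.apply ℝ (fun _ : Fin 2 => (A → ℝ)) ℝ
        ![Pi.single i 1, Pi.single j 1]).continuous.comp c1
    have c3 : Continuous fun M : Matrix A A ℝ =>
        (Matrix.toEuclideanCLM (𝕜 := ℝ) M : EuclideanSpace ℝ A →L[ℝ] EuclideanSpace ℝ A) := by
      let Lmap : Matrix A A ℝ →ₗ[ℝ] (EuclideanSpace ℝ A →L[ℝ] EuclideanSpace ℝ A) :=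
        { toFun := fun M => Matrix.toEuclideanCLM (𝕜 := ℝ) M,
          map_add' := fun M N => by simp,
          map_smul' := fun r M => by simp }
      exact Lmap.continuous_of_finiteDimensional
    exact continuous_norm.comp (c3.comp c2)
  exact (hcompact.image hcont).bddAbove

end AuxAnalysis

/-- Lemma: stationarity bound.
If `μ` is a stationary distribution of a PIN model and `V` is of class `C²`, then
`|E_μ[∇V(θ(X))·D(X)]| ≤ K/n` where `K = max_{θ ∈ P(𝒜)} ‖∇²V(θ)‖₂`. -/
theorem abs_expectation_gradDot_meanDrift_le {V A : Type*} [Fintype V] [DecidableEq V]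
    [Fintype A] [DecidableEq A] [Nonempty A]
    (E : Finset (V × V)) (ρ : ℝ) (P : A → A → ℝ) (φ : A → A → A → ℝ)
    (hmodel : IsPinModel E ρ P φ)
    (μ : (V → A) → ℝ) (hμ : IsPinStationary E ρ P φ μ)
    (W : (A → ℝ) → ℝ) (hW : ContDiff ℝ 2 W) :
    |∑ x : V → A, μ x * fderiv ℝ W (confType x) (meanDrift E ρ P φ x)| ≤
      sSup {k : ℝ | ∃ θ : A → ℝ, inSimplex θ ∧ k = hessOpNorm2 W θ} /
        (Fintype.card V : ℝ) := by
  classical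
  obtain ⟨hρ0, hρ1, hP0, hP1, hφ0, hφ1, hE, hloop⟩ := hmodel
  obtain ⟨hμ0, hμ1, hμs⟩ := hμ
  by_cases hV : Fintype.card V = 0
  · have hzero : ∀ x : V → A, fderiv ℝ W (confType x) (meanDrift E ρ P φ x) = 0 := by
      intro x
      have hmd : meanDrift E ρ P φ x = 0 := by
        funext i
        simp [meanDrift, hV]
      rw [hmd, map_zero]
    have hLHS : ∑ x : V → A, μ x * fderiv ℝ W (confType x) (meanDrift E ρ P φ x) = 0 := by
      rw [Finset.sum_congr rfl fun x _ => by rw [hzero x, mul_zero]]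
      exact Finset.sum_const_zero
    rw [hLHS, abs_zero, hV]
    simp
  have hn0 : (0:ℝ) < (Fintype.card V : ℝ) := by
    exact_mod_cast Nat.pos_of_ne_zero hV
  set n : ℝ := (Fintype.card V : ℝ) with hn
  set K := sSup {k : ℝ | ∃ θ : A → ℝ, inSimplex θ ∧ k = hessOpNorm2 W θ} with hK
  have hbdd := bddAbove_hessSet (A := A) hW
  have hKge : ∀ θ : A → ℝ, inSimplex θ → hessOpNorm2 W θ ≤ K :=
    fun θ hθ => le_csSup hbdd ⟨θ, hθ, rfl⟩
  have hK0 : 0 ≤ K := by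
    have hcA : (0:ℝ) < (Fintype.card A : ℝ) := by exact_mod_cast Fintype.card_pos
    have huni : inSimplex (fun _ : A => (Fintype.card A : ℝ)⁻¹) := by
      constructor
      · intro i; positivity
      · rw [Finset.sum_const, Finset.card_univ, nsmul_eq_mul]
        field_simp
    exact le_trans (norm_nonneg _) (hKge _ huni)
  set T := pinTrans E ρ P φ with hT
  have hT1 : ∀ x : V → A, ∑ y : V → A, T x y = 1 := fun x => sum_pinTrans E ρ P φ x
  have hT0 : ∀ x y : V → A, 0 ≤ T x y := fun x y =>
    pinTrans_nonneg E P φ hρ0 hρ1 hP0 hP1 hφ0 hφ1 hE x y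
  set R : (V → A) → (V → A) → ℝ := fun x y =>
    W (confType y) - W (confType x) - fderiv ℝ W (confType x) (confType y - confType x)
    with hR
  have hRb : ∀ x y : V → A, T x y * |R x y| ≤ T x y * (K / n ^ 2) := by
    intro x y
    by_cases hxy : x = y
    · subst hxy
      have hR0 : R x x = 0 := by simp [hR]
      rw [hR0, abs_zero, mul_zero]
      exact mul_nonneg (hT0 x x) (div_nonneg hK0 (by positivity))
    by_cases hTz : T x y = 0
    · rw [hTz]; simp
    have hToff : Toff E ρ P φ x y ≠ 0 := by
      rw [hT, pinTrans, if_neg hxy] at hTz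
      exact hTz
    have hcard : (Finset.univ.filter fun v => x v ≠ y v).card = 1 := by
      by_contra h
      exact hToff (if_neg h)
    obtain ⟨u, b, hb, rfl⟩ := (diff_card_one_iff x y).mp hcard
    refine mul_le_mul_of_nonneg_left ?_ (hT0 x _)
    set θx := confType x with hθx
    set θy := confType (Function.update x u b) with hθy
    set d : A → ℝ := θy - θx with hd
    have hsx : inSimplex θx := inSimplex_confType hV x
    have hsy : inSimplex θy := inSimplex_confType hV _
    have hsum2 : ∑ i, d i ^ 2 = 2 / n ^ 2 := by
      simp only [hd, hθy, hθx, Pi.sub_apply]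
      rw [sum_sq_confType_update_sub x u b hb, hn]
    have hC : ∀ t : ℝ, t ∈ Set.Icc (0:ℝ) 1 →
        |fderiv ℝ (fderiv ℝ W) (θx + t • d) d d| ≤ K * (2 / n ^ 2) := by
      intro t ht
      have hmem : inSimplex (θx + t • d) := by
        constructor
        · intro i
          have h1 := hsx.1 i
          have h2 := hsy.1 i
          have hval : (θx + t • d) i = (1 - t) * θx i + t * θy i := by
            simp only [Pi.add_apply, Pi.smul_apply, hd, Pi.sub_apply, smul_eq_mul]
            ring
          rw [hval]
          nlinarith [ht.1, ht.2]
        · have hval : ∀ i, (θx + t • d) i = θx i + t * (θy i - θx i) := by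
            intro i
            simp only [Pi.add_apply, Pi.smul_apply, hd, Pi.sub_apply, smul_eq_mul]
          rw [Finset.sum_congr rfl fun i _ => hval i]
          rw [Finset.sum_add_distrib, ← Finset.mul_sum, Finset.sum_sub_distrib,
            hsx.2, hsy.2]
          ring
      calc |fderiv ℝ (fderiv ℝ W) (θx + t • d) d d|
          ≤ hessOpNorm2 W (θx + t • d) * ∑ i, d i ^ 2 := hess_apply_abs_le _ d
        _ ≤ K * ∑ i, d i ^ 2 := mul_le_mul_of_nonneg_right (hKge _ hmem)
            (Finset.sum_nonneg fun i _ => sq_nonneg _)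
        _ = K * (2 / n ^ 2) := by rw [hsum2]
    have htay := taylor_two_bound hW θx d (K * (2 / n ^ 2)) hC
    have hxd : θx + d = θy := by rw [hd]; abel
    rw [hxd] at htay
    have habs : |R x (Function.update x u b)| ≤ K * (2 / n ^ 2) / 2 := by
      simpa [hR, hθx, hθy, hd] using htay
    calc |R x (Function.update x u b)| ≤ K * (2 / n ^ 2) / 2 := habs
      _ = K / n ^ 2 := by ring
  have hswap : ∑ x : V → A, μ x * ∑ y : V → A, T x y * W (confType y)
      = ∑ x : V → A, μ x * W (confType x) := by
    calc ∑ x : V → A, μ x * ∑ y : V → A, T x y * W (confType y)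
        = ∑ y : V → A, (∑ x : V → A, μ x * T x y) * W (confType y) := by
          simp_rw [Finset.mul_sum]
          rw [Finset.sum_comm]
          refine Finset.sum_congr rfl fun y _ => ?_
          rw [Finset.sum_mul]
          exact Finset.sum_congr rfl fun x _ => by ring
      _ = ∑ y : V → A, μ y * W (confType y) := by
          refine Finset.sum_congr rfl fun y _ => ?_
          rw [hμs y]
  have hdrift_eq : ∀ x : V → A, fderiv ℝ W (confType x) (meanDrift E ρ P φ x)
      = n * ∑ y : V → A, T x y * (fderiv ℝ W (confType x) (confType y - confType x)) := by
    intro x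
    have hvec : meanDrift E ρ P φ x
        = n • ∑ y : V → A, T x y • (confType y - confType x) := by
      funext i
      simp [meanDrift, Finset.sum_apply, Pi.smul_apply, Pi.sub_apply, smul_eq_mul, hT, hn]
    rw [hvec, map_smul, map_sum, smul_eq_mul]
    congr 1
    refine Finset.sum_congr rfl fun y _ => ?_
    rw [map_smul, smul_eq_mul]
  have hmain : ∑ x : V → A, μ x * fderiv ℝ W (confType x) (meanDrift E ρ P φ x)
      = -(n * ∑ x : V → A, μ x * ∑ y : V → A, T x y * R x y) := by
    have hper : ∀ x : V → A,
        μ x * fderiv ℝ W (confType x) (meanDrift E ρ P φ x)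
          = n * ((μ x * ∑ y : V → A, T x y * W (confType y)) - μ x * W (confType x)
              - μ x * ∑ y : V → A, T x y * R x y) := by
      intro x
      rw [hdrift_eq x]
      have hinner : ∑ y : V → A, T x y * (fderiv ℝ W (confType x) (confType y - confType x))
          = (∑ y : V → A, T x y * W (confType y)) - W (confType x)
            - ∑ y : V → A, T x y * R x y := by
        have hterm : ∀ y : V → A,
            T x y * (fderiv ℝ W (confType x) (confType y - confType x))
              = T x y * W (confType y) - T x y * W (confType x) - T x y * R x y := by
          intro y
          simp only [hR]
          ring
        rw [Finset.sum_congr rfl fun y _ => hterm y]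
        rw [Finset.sum_sub_distrib, Finset.sum_sub_distrib, ← Finset.sum_mul, hT1 x, one_mul]
      rw [hinner]
      ring
    rw [Finset.sum_congr rfl fun x _ => hper x, ← Finset.mul_sum]
    rw [Finset.sum_sub_distrib, Finset.sum_sub_distrib, hswap]
    ring
  rw [hmain, abs_neg, abs_mul, abs_of_nonneg (le_of_lt hn0)]
  have hfin : |∑ x : V → A, μ x * ∑ y : V → A, T x y * R x y| ≤ K / n ^ 2 := by
    calc |∑ x : V → A, μ x * ∑ y : V → A, T x y * R x y|
        ≤ ∑ x : V → A, |μ x * ∑ y : V → A, T x y * R x y| :=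
          Finset.abs_sum_le_sum_abs _ _
      _ ≤ ∑ x : V → A, μ x * (K / n ^ 2) := by
          refine Finset.sum_le_sum fun x _ => ?_
          rw [abs_mul, abs_of_nonneg (hμ0 x)]
          refine mul_le_mul_of_nonneg_left ?_ (hμ0 x)
          calc |∑ y : V → A, T x y * R x y|
              ≤ ∑ y : V → A, |T x y * R x y| := Finset.abs_sum_le_sum_abs _ _
            _ ≤ ∑ y : V → A, T x y * (K / n ^ 2) := by
                refine Finset.sum_le_sum fun y _ => ?_
                rw [abs_mul, abs_of_nonneg (hT0 x y)]
                exact hRb x y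
            _ = K / n ^ 2 := by rw [← Finset.sum_mul, hT1 x, one_mul]
      _ = K / n ^ 2 := by rw [← Finset.sum_mul, hμ1, one_mul]
  have hne : n ≠ 0 := ne_of_gt hn0
  calc n * |∑ x : V → A, μ x * ∑ y : V → A, T x y * R x y|
      ≤ n * (K / n ^ 2) := mul_le_mul_of_nonneg_left hfin (le_of_lt hn0)
    _ = K / n := by
        field_simp

end
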